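/- Let q be a prime power, let c, h, M be positive integers with c < M/2, and let r : 𝔽_q → 𝔽_q be a function. Suppose F(X), G(X) ∈ 𝔽_q[X] with deg(F) < cq and deg(G) < cq are both r-twisted (h, M)-pseudopolynomials, and let k be an integer with k > (M/(M − 2c))·(h + 1). Then there exist polynomials A(X), B(X) ∈ 𝔽_q[X], not both zero, each of degree less than Mq and pseudodegree at most k, such that A(X)·F(X) = B(X)·G(X). -/

import Mathlib

open Polynomial

/-- `A ∈ 𝔽_q[X]` has pseudodegree at most `k`: for every `ℓ ≥ 0`, the remainder of the
`ℓ`-th Hasse derivative of `A` upon division by `Λ(X) = X^q - X` has degree at most `k`. -/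
def PdegLE {F : Type*} [Field F] (q : ℕ) (A : F[X]) (k : ℕ) : Prop :=
  ∀ ℓ : ℕ, ((hasseDeriv ℓ A) %ₘ (X ^ q - X)).degree ≤ (k : WithBot ℕ)

/-- `P ∈ 𝔽_q[X]` is an `r`-twisted `(h, M)`-pseudopolynomial: for every `ℓ < M` there is
`U_ℓ ∈ 𝔽_q[X]` of degree at most `h` with `P^{[ℓ]}(α) = r(α)·U_ℓ(α)` for all `α ∈ 𝔽_q`. -/
def Twisted {F : Type*} [Field F] (r : F → F) (h M : ℕ) (P : F[X]) : Prop :=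
  ∀ ℓ < M, ∃ U : F[X], U.degree ≤ (h : WithBot ℕ) ∧
    ∀ α : F, (hasseDeriv ℓ P).eval α = r α * U.eval α

section Main
variable {F : Type*} [Field F]

lemma aux_lt_succ_iff {x : WithBot ℕ} {k : ℕ} :
    x < ((k + 1 : ℕ) : WithBot ℕ) ↔ x ≤ (k : WithBot ℕ) := by
  cases x with
  | bot =>
    simp only [bot_le, iff_true]
    exact_mod_cast WithBot.bot_lt_coe (k+1)
  | coe n =>
    rw [Nat.cast_withBot, Nat.cast_withBot, WithBot.coe_lt_coe, WithBot.coe_le_coe]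
    exact Nat.lt_succ_iff

end Main

section Aux
variable {F : Type*} [Field F]
set_option linter.unusedSectionVars false

lemma aux_choose [Fintype F] {q t : ℕ} (hq : Fintype.card F = q) (h1 : 0 < t) (h2 : t < q) :
    ((q.choose t : ℕ) : F) = 0 := by
  set p := ringChar F with hp
  haveI : CharP F p := ringChar.charP F
  obtain ⟨n, hpp, hcard⟩ := FiniteField.card F p
  rw [hq] at hcard
  have hdvd : p ∣ q.choose t := by
    subst hcard
    exact Nat.Prime.dvd_choose_pow hpp h1.ne' (by omega)
  exact (CharP.cast_eq_zero_iff F p _).2 hdvd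

lemma aux_degree_hasseDeriv_le (n : ℕ) (p : F[X]) :
    (hasseDeriv n p).degree ≤ p.degree := by
  by_cases h0 : hasseDeriv n p = 0
  · simp [h0]
  · have hp0 : p ≠ 0 := by
      rintro rfl; simp at h0
    rw [degree_eq_natDegree h0, degree_eq_natDegree hp0]
    exact_mod_cast le_trans (natDegree_hasseDeriv_le p n) (Nat.sub_le _ _)

lemma aux_hD_lambda [Fintype F] {q : ℕ} (hq : Fintype.card F = q) (t : ℕ) :
    ∃ e : F, (X ^ q - X : F[X]) ∣ hasseDeriv t (X ^ q - X) - C e := by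
  have hq2 : 2 ≤ q := hq ▸ Fintype.one_lt_card
  have hX : (X : F[X]) = monomial 1 1 := by simp [monomial_one_one_eq_X]
  have hXq : (X : F[X]) ^ q = monomial q 1 := by simp [monomial_one_right_eq_X_pow]
  rcases Nat.lt_or_ge t 1 with ht | ht
  · interval_cases t
    exact ⟨0, by simpa using dvd_refl _⟩
  rcases Nat.lt_or_ge t 2 with ht1 | ht2
  · interval_cases t
    refine ⟨-1, ?_⟩
    have hc0 : ((q : ℕ) : F) = 0 := by rw [← hq]; exact Nat.cast_card_eq_zero F
    have : hasseDeriv 1 (X ^ q - X : F[X]) = C (-1) := by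
      rw [hasseDeriv_one']
      simp only [derivative_sub, derivative_X_pow, derivative_X]
      rw [hc0]
      simp
    rw [this]
    simp
  · -- t ≥ 2
    have hhd : hasseDeriv t (X ^ q - X : F[X])
        = monomial (q - t) ((q.choose t : ℕ) : F) := by
      rw [map_sub, hXq, hX, hasseDeriv_monomial, hasseDeriv_monomial]
      have : Nat.choose 1 t = 0 := Nat.choose_eq_zero_of_lt (by omega)
      simp [this]
    rcases Nat.lt_or_ge t q with htq | htq
    · refine ⟨0, ?_⟩
      rw [hhd, aux_choose hq (by omega) htq]
      simp
    rcases Nat.eq_or_lt_of_le htq with rfl | htq'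
    · refine ⟨1, ?_⟩
      rw [hhd]
      simp
    · refine ⟨0, ?_⟩
      rw [hhd]
      have : q.choose t = 0 := Nat.choose_eq_zero_of_lt htq'
      simp [this]

lemma aux_hD_lambda_pow [Fintype F] {q : ℕ} (hq : Fintype.card F = q) (i t : ℕ) :
    ∃ d : F, (X ^ q - X : F[X]) ∣ hasseDeriv t ((X ^ q - X) ^ i : F[X]) - C d := by
  induction i generalizing t with
  | zero =>
    refine ⟨if t = 0 then 1 else 0, ?_⟩
    rcases eq_or_ne t 0 with rfl | ht
    · simp
    · rw [pow_zero]
      rcases Nat.exists_eq_succ_of_ne_zero ht with ⟨s, rfl⟩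
      rw [← C_1, hasseDeriv_C _ _ (Nat.succ_pos s)]
      simp [ht]
  | succ i ih =>
    rw [pow_succ]
    rw [hasseDeriv_mul]
    choose d hd using fun s => ih s
    choose e he using fun s => aux_hD_lambda hq s
    refine ⟨∑ ij ∈ Finset.HasAntidiagonal.antidiagonal t, d ij.1 * e ij.2, ?_⟩
    rw [map_sum, ← Finset.sum_sub_distrib]
    refine Finset.dvd_sum fun ij _ => ?_
    have key : hasseDeriv ij.1 ((X ^ q - X : F[X]) ^ i) * hasseDeriv ij.2 (X ^ q - X)
        - C (d ij.1 * e ij.2)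
        = (hasseDeriv ij.1 ((X ^ q - X : F[X]) ^ i) - C (d ij.1)) * hasseDeriv ij.2 (X ^ q - X)
          + C (d ij.1) * (hasseDeriv ij.2 (X ^ q - X) - C (e ij.2)) := by
      rw [C_mul]; ring
    rw [key]
    exact dvd_add (Dvd.dvd.mul_right (hd ij.1) _) (Dvd.dvd.mul_left (he ij.2) _)
  
end Aux

section Aux2
variable {F : Type*} [Field F]

set_option linter.unusedSectionVars false

lemma aux_digits_zero (L : F[X]) (hL0 : L ≠ 0) (hdegL : 0 < L.degree) :
    ∀ (n : ℕ) (a : Fin n → F[X]), (∀ i, (a i).degree < L.degree) →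
      (∑ i, a i * L ^ (i : ℕ)) = 0 → ∀ i, a i = 0 := by
  intro n
  induction n with
  | zero => intro a _ _ i; exact absurd i.2 (by omega)
  | succ n ih =>
    intro a hdeg hsum i
    have hsplit : (∑ i, a i * L ^ (i : ℕ))
        = a 0 + L * ∑ j : Fin n, a j.succ * L ^ (j : ℕ) := by
      rw [Fin.sum_univ_succ]
      simp only [Fin.val_zero, pow_zero, mul_one, Fin.val_succ]
      congr 1
      rw [Finset.mul_sum]
      refine Finset.sum_congr rfl fun j _ => ?_
      ring
    rw [hsplit] at hsum
    have ha0 : a 0 = 0 := by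
      refine eq_zero_of_dvd_of_degree_lt ⟨-(∑ j : Fin n, a j.succ * L ^ (j : ℕ)), ?_⟩ (hdeg 0)
      linear_combination hsum
    have htail : (∑ j : Fin n, a j.succ * L ^ (j : ℕ)) = 0 := by
      rw [ha0, zero_add] at hsum
      rcases mul_eq_zero.mp hsum with h | h
      · exact absurd h hL0
      · exact h
    have := ih (fun j => a j.succ) (fun j => hdeg j.succ) htail
    rcases Fin.eq_zero_or_eq_succ i with rfl | ⟨j, rfl⟩
    · exact ha0
    · exact this j

lemma aux_degree_mul_lt {P Q : F[X]} {m n : ℕ} (hm : 0 < m) (hn : 0 < n)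
    (hP : P.degree < (m : ℕ)) (hQ : Q.degree < (n : ℕ)) :
    (P * Q).degree < ((m + n - 1 : ℕ) : WithBot ℕ) := by
  have hmn : (0:ℕ) < m + n - 1 := by omega
  by_cases hP0 : P = 0
  · simp only [hP0, zero_mul, degree_zero]
    exact_mod_cast WithBot.bot_lt_coe _
  by_cases hQ0 : Q = 0
  · simp only [hQ0, mul_zero, degree_zero]
    exact_mod_cast WithBot.bot_lt_coe _
  rw [degree_mul, degree_eq_natDegree hP0, degree_eq_natDegree hQ0]
  have h1 : P.natDegree < m := (natDegree_lt_iff_degree_lt hP0).2 hP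
  have h2 : Q.natDegree < n := (natDegree_lt_iff_degree_lt hQ0).2 hQ
  exact_mod_cast (by push_cast; exact_mod_cast (by omega : P.natDegree + Q.natDegree < m + n - 1)
    : ((P.natDegree + Q.natDegree : ℕ) : WithBot ℕ) < ((m + n - 1 : ℕ) : WithBot ℕ))

lemma aux_pow_dvd {α : F} {M : ℕ} {H : F[X]}
    (hvan : ∀ ℓ < M, (hasseDeriv ℓ H).eval α = 0) :
    (X - C α) ^ M ∣ H := by
  have hdvd : (X : F[X]) ^ M ∣ taylor α H := by
    rw [X_pow_dvd_iff]
    intro d hd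
    rw [taylor_coeff]
    exact hvan d hd
  obtain ⟨T, hT⟩ := hdvd
  have hH : H = taylor (-α) (taylor α H) := by
    rw [taylor_taylor, neg_add_cancel, taylor_zero]
  rw [hH, hT, taylor_mul]
  refine Dvd.dvd.mul_right ?_ _
  have : taylor (-α) ((X : F[X]) ^ M) = (X - C α) ^ M := by
    rw [taylor_apply, pow_comp, X_comp, map_neg, ← sub_eq_add_neg]
  rw [this]

lemma aux_prod_dvd {M : ℕ} {H : F[X]} [Fintype F]
    (h : ∀ α : F, (X - C α) ^ M ∣ H) :
    (∏ α : F, (X - C α) ^ M) ∣ H := by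
  refine Finset.prod_dvd_of_coprime ?_ (fun α _ => h α)
  have hpair : Pairwise (Function.onFun IsCoprime fun α : F => (X - C α : F[X])) :=
    pairwise_coprime_X_sub_C Function.injective_id
  exact (hpair.mono (fun i j hc => hc.pow)).set_pairwise _

lemma aux_prod_degree {M : ℕ} [Fintype F] :
    (∏ α : F, ((X : F[X]) - C α) ^ M).degree = ((M * Fintype.card F : ℕ) : WithBot ℕ) := by
  have hne : ∀ α ∈ Finset.univ, ((X : F[X]) - C α) ^ M ≠ 0 :=
    fun α _ => pow_ne_zero _ (X_sub_C_ne_zero α)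
  have h0 : (∏ α : F, ((X : F[X]) - C α) ^ M) ≠ 0 := Finset.prod_ne_zero_iff.2 hne
  rw [degree_eq_natDegree h0, natDegree_prod _ _ hne]
  congr 1
  simp [natDegree_pow, mul_comm]

end Aux2

section Aux3
variable {F : Type*} [Field F]

set_option linter.unusedSectionVars false

/-- Reduction of the `ℓ`-th Hasse derivative of `∑ i, a i * L^i` modulo `L`,
expressed through constants `Dc i t` with `L ∣ hasseDeriv t (L^i) - C (Dc i t)`. -/
noncomputable def RedPoly (Dc : ℕ → ℕ → F) (N : ℕ) (a : Fin N → F[X]) (x : ℕ) : F[X] :=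
  ∑ i : Fin N, ∑ ij ∈ Finset.HasAntidiagonal.antidiagonal x, hasseDeriv ij.1 (a i) * C (Dc i ij.2)

lemma RedPoly_dvd {L : F[X]} {Dc : ℕ → ℕ → F} {N : ℕ}
    (hDc : ∀ i t, L ∣ hasseDeriv t (L ^ i) - C (Dc i t))
    (a : Fin N → F[X]) (x : ℕ) :
    L ∣ hasseDeriv x (∑ i, a i * L ^ (i : ℕ)) - RedPoly Dc N a x := by
  rw [map_sum, RedPoly, ← Finset.sum_sub_distrib]
  refine Finset.dvd_sum fun i _ => ?_
  rw [hasseDeriv_mul, ← Finset.sum_sub_distrib]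
  refine Finset.dvd_sum fun ij _ => ?_
  have key : hasseDeriv ij.1 (a i) * hasseDeriv ij.2 (L ^ (i : ℕ))
      - hasseDeriv ij.1 (a i) * C (Dc i ij.2)
      = hasseDeriv ij.1 (a i) * (hasseDeriv ij.2 (L ^ (i : ℕ)) - C (Dc i ij.2)) := by ring
  rw [key]
  exact Dvd.dvd.mul_left (hDc i ij.2) _

lemma RedPoly_degree {Dc : ℕ → ℕ → F} {N : ℕ} {k : ℕ} {a : Fin N → F[X]}
    (ha : ∀ i, (a i).degree ≤ (k : WithBot ℕ)) (x : ℕ) :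
    (RedPoly Dc N a x).degree ≤ (k : WithBot ℕ) := by
  refine le_trans (degree_sum_le _ _) (Finset.sup_le fun i _ => ?_)
  refine le_trans (degree_sum_le _ _) (Finset.sup_le fun ij _ => ?_)
  refine le_trans (degree_mul_le _ _) ?_
  have h1 : (hasseDeriv ij.1 (a i)).degree ≤ (k : WithBot ℕ) :=
    le_trans (aux_degree_hasseDeriv_le _ _) (ha i)
  calc (hasseDeriv ij.1 (a i)).degree + (C (Dc i ij.2)).degree
      ≤ (k : WithBot ℕ) + 0 := add_le_add h1 degree_C_le
    _ = (k : WithBot ℕ) := add_zero _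

lemma RedPoly_add {Dc : ℕ → ℕ → F} {N : ℕ} (a b : Fin N → F[X]) (x : ℕ) :
    RedPoly Dc N (a + b) x = RedPoly Dc N a x + RedPoly Dc N b x := by
  simp only [RedPoly, Pi.add_apply, map_add, add_mul, Finset.sum_add_distrib]

lemma RedPoly_smul {Dc : ℕ → ℕ → F} {N : ℕ} (s : F) (a : Fin N → F[X]) (x : ℕ) :
    RedPoly Dc N (s • a) x = s • RedPoly Dc N a x := by
  simp only [RedPoly, Pi.smul_apply, map_smul, smul_mul_assoc, Finset.smul_sum]

/-- The interpolation conditions. -/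
noncomputable def Wpoly (Dc : ℕ → ℕ → F) (N : ℕ) (U V : ℕ → F[X])
    (p : (Fin N → F[X]) × (Fin N → F[X])) (ℓ : ℕ) : F[X] :=
  ∑ xy ∈ Finset.HasAntidiagonal.antidiagonal ℓ,
    (RedPoly Dc N p.1 xy.1 * U xy.2 - RedPoly Dc N p.2 xy.1 * V xy.2)

lemma Wpoly_add {Dc : ℕ → ℕ → F} {N : ℕ} {U V : ℕ → F[X]}
    (p p' : (Fin N → F[X]) × (Fin N → F[X])) (ℓ : ℕ) :
    Wpoly Dc N U V (p + p') ℓ = Wpoly Dc N U V p ℓ + Wpoly Dc N U V p' ℓ := by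
  simp only [Wpoly, Prod.fst_add, Prod.snd_add, RedPoly_add, add_mul]
  rw [← Finset.sum_add_distrib]
  refine Finset.sum_congr rfl fun xy _ => ?_
  ring

lemma Wpoly_smul {Dc : ℕ → ℕ → F} {N : ℕ} {U V : ℕ → F[X]}
    (s : F) (p : (Fin N → F[X]) × (Fin N → F[X])) (ℓ : ℕ) :
    Wpoly Dc N U V (s • p) ℓ = s • Wpoly Dc N U V p ℓ := by
  simp only [Wpoly, Prod.smul_fst, Prod.smul_snd, RedPoly_smul, Finset.smul_sum]
  refine Finset.sum_congr rfl fun xy _ => ?_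
  simp only [smul_sub, smul_mul_assoc]

lemma Wpoly_degree {Dc : ℕ → ℕ → F} {N : ℕ} {U V : ℕ → F[X]} {k h M : ℕ}
    (hU : ∀ s < M, (U s).degree ≤ (h : WithBot ℕ))
    (hV : ∀ s < M, (V s).degree ≤ (h : WithBot ℕ))
    (p : (Fin N → F[X]) × (Fin N → F[X]))
    (hp1 : ∀ i, (p.1 i).degree ≤ (k : WithBot ℕ))
    (hp2 : ∀ i, (p.2 i).degree ≤ (k : WithBot ℕ))
    {ℓ : ℕ} (hℓ : ℓ < M) :
    (Wpoly Dc N U V p ℓ).degree ≤ ((k + h : ℕ) : WithBot ℕ) := by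
  refine le_trans (degree_sum_le _ _) (Finset.sup_le fun xy hxy => ?_)
  have hy : xy.2 < M := by
    have := Finset.HasAntidiagonal.mem_antidiagonal.1 hxy
    omega
  have hb : ((k : WithBot ℕ) + (h : WithBot ℕ)) = ((k + h : ℕ) : WithBot ℕ) := by
    push_cast; rfl
  refine le_trans (degree_sub_le _ _) (max_le ?_ ?_)
  · refine le_trans (degree_mul_le _ _) ?_
    rw [← hb]
    exact add_le_add (RedPoly_degree hp1 _) (hU _ hy)
  · refine le_trans (degree_mul_le _ _) ?_
    rw [← hb]
    exact add_le_add (RedPoly_degree hp2 _) (hV _ hy)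

end Aux3


/-- Let `c, h, M` be positive with `c < M/2`, and let `F, G ∈ 𝔽_q[X]`
of degree `< cq` both be `r`-twisted `(h, M)`-pseudopolynomials. Let
`k > (M/(M-2c))·(h+1)`. Then there exist `A, B ∈ 𝔽_q[X]`, not both zero, each of degree
`< Mq` and pseudodegree at most `k`, with `A·F = B·G`. -/
theorem stmt14 {F : Type*} [Field F] [Fintype F] (q : ℕ) (hq : Fintype.card F = q)
    (c h M : ℕ) (hc : 0 < c) (hh : 0 < h) (hM : 0 < M)
    (hcM : (c : ℝ) < (M : ℝ) / 2)
    (r : F → F) (Fp Gp : F[X])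
    (hFdeg : Fp.degree < ((c * q : ℕ) : WithBot ℕ))
    (hGdeg : Gp.degree < ((c * q : ℕ) : WithBot ℕ))
    (hFtw : Twisted r h M Fp) (hGtw : Twisted r h M Gp)
    (k : ℕ) (hk : (M : ℝ) / ((M : ℝ) - 2 * (c : ℝ)) * ((h : ℝ) + 1) < (k : ℝ)) :
    ∃ A B : F[X], ¬(A = 0 ∧ B = 0) ∧
      A.degree < ((M * q : ℕ) : WithBot ℕ) ∧ B.degree < ((M * q : ℕ) : WithBot ℕ) ∧
      PdegLE q A k ∧ PdegLE q B k ∧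
      A * Fp = B * Gp := by
    classical
  have hq2 : 2 ≤ q := by rw [← hq]; exact Fintype.one_lt_card
  have hq0 : 0 < q := by omega
  have h2c : 2 * c < M := by
    have : ((2 * c : ℕ) : ℝ) < (M : ℝ) := by push_cast; nlinarith
    exact_mod_cast this
  have hcMn : c < M := by omega
  have hmonL : (X ^ q - X : F[X]).Monic :=
    monic_X_pow_sub (by rw [degree_X]; exact_mod_cast (by omega : 1 < q))
  have hL0 : (X ^ q - X : F[X]) ≠ 0 := hmonL.ne_zero
  have hdegL : (X ^ q - X : F[X]).degree = (q : WithBot ℕ) := by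
    rw [degree_sub_eq_left_of_degree_lt, degree_X_pow]
    rw [degree_X, degree_X_pow]
    exact_mod_cast (by omega : 1 < q)
  rcases le_or_gt q k with hqk | hkq
  · -- trivial branch: every polynomial has pseudodegree ≤ k
    have hPdeg : ∀ P : F[X], PdegLE q P k := by
      intro P ℓ
      refine le_trans (le_of_lt (degree_modByMonic_lt _ hmonL)) ?_
      rw [hdegL]
      exact_mod_cast hqk
    have hcqMq : ((c * q : ℕ) : WithBot ℕ) ≤ ((M * q : ℕ) : WithBot ℕ) := by
      exact_mod_cast Nat.mul_le_mul_right q (le_of_lt hcMn)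
    by_cases hFG : Fp = 0 ∧ Gp = 0
    · refine ⟨1, 1, by simp, ?_, ?_, hPdeg 1, hPdeg 1, by rw [hFG.1, hFG.2]⟩ <;>
      · rw [degree_one]
        exact_mod_cast Nat.pos_of_ne_zero (Nat.mul_ne_zero (by omega) (by omega))
    · exact ⟨Gp, Fp, fun hz => hFG ⟨hz.2, hz.1⟩,
        lt_of_lt_of_le hGdeg hcqMq, lt_of_lt_of_le hFdeg hcqMq,
        hPdeg Gp, hPdeg Fp, mul_comm Gp Fp⟩
  · -- main branch
    obtain ⟨d, hd, hd1⟩ : ∃ d, M = 2 * c + d ∧ 1 ≤ d := ⟨M - 2 * c, by omega, by omega⟩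
    set N := M - c with hNdef
    have hNc : N + c = M := by omega
    have hN1 : 1 ≤ N := by omega
    have hMk : M * (h + 1) < k * d := by
      have hpos : (0 : ℝ) < (M : ℝ) - 2 * c := by
        have : ((2 * c : ℕ) : ℝ) < (M : ℝ) := by exact_mod_cast h2c
        push_cast at this; linarith
      have hr : (M : ℝ) * (h + 1) < (k : ℝ) * ((M : ℝ) - 2 * c) := by
        rw [div_mul_eq_mul_div, div_lt_iff₀ hpos] at hk
        linarith
      have hdr : ((d : ℕ) : ℝ) = (M : ℝ) - 2 * c := by
        rw [hd]; push_cast; ring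
      rw [← hdr] at hr
      exact_mod_cast hr
    have hdim : M * (k + h + 1) < 2 * (N * (k + 1)) := by
      have hNd : N = c + d := by omega
      rw [hNd, hd]
      nlinarith [hMk, hd]
    -- choice data for the twisted conditions
    have hUex : ∀ s : ℕ, ∃ Us : F[X], s < M →
        Us.degree ≤ (h : WithBot ℕ) ∧ ∀ α : F, (hasseDeriv s Fp).eval α = r α * Us.eval α := by
      intro s
      by_cases hs : s < M
      · obtain ⟨Us, h1, h2⟩ := hFtw s hs
        exact ⟨Us, fun _ => ⟨h1, h2⟩⟩
      · exact ⟨0, fun hs' => absurd hs' hs⟩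
    have hVex : ∀ s : ℕ, ∃ Vs : F[X], s < M →
        Vs.degree ≤ (h : WithBot ℕ) ∧ ∀ α : F, (hasseDeriv s Gp).eval α = r α * Vs.eval α := by
      intro s
      by_cases hs : s < M
      · obtain ⟨Vs, h1, h2⟩ := hGtw s hs
        exact ⟨Vs, fun _ => ⟨h1, h2⟩⟩
      · exact ⟨0, fun hs' => absurd hs' hs⟩
    choose U hU using hUex
    choose V hV using hVex
    have hUdeg : ∀ s < M, (U s).degree ≤ (h : WithBot ℕ) := fun s hs => (hU s hs).1
    have hVdeg : ∀ s < M, (V s).degree ≤ (h : WithBot ℕ) := fun s hs => (hV s hs).1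
    have hUeval : ∀ s < M, ∀ α : F, (hasseDeriv s Fp).eval α = r α * (U s).eval α :=
      fun s hs => (hU s hs).2
    have hVeval : ∀ s < M, ∀ α : F, (hasseDeriv s Gp).eval α = r α * (V s).eval α :=
      fun s hs => (hV s hs).2
    -- constants for Hasse derivatives of powers of Λ
    choose Dc hDc using fun i t => aux_hD_lambda_pow (F := F) hq i t
    -- linear map setup
    haveI hfinPk : Module.Finite F (degreeLT F (k + 1)) :=
      Module.Finite.equiv (degreeLTEquiv F (k + 1)).symm
    haveI hfinCo : Module.Finite F (degreeLT F (k + h + 1)) :=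
      Module.Finite.equiv (degreeLTEquiv F (k + h + 1)).symm
    have hdegp : ∀ (w : Fin N → degreeLT F (k + 1)) (i : Fin N),
        ((w i : F[X])).degree ≤ (k : WithBot ℕ) :=
      fun w i => aux_lt_succ_iff.1 (mem_degreeLT.1 (w i).2)
    have hmem : ∀ (p : (Fin N → degreeLT F (k + 1)) × (Fin N → degreeLT F (k + 1))) (ℓ : Fin M),
        Wpoly Dc N U V (fun i => ((p.1 i : F[X])), fun i => ((p.2 i : F[X]))) ℓ
          ∈ degreeLT F (k + h + 1) := by
      intro p ℓ
      rw [mem_degreeLT]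
      refine lt_of_le_of_lt (Wpoly_degree hUdeg hVdeg _ (hdegp p.1) (hdegp p.2) ℓ.2) ?_
      exact_mod_cast Nat.lt_succ_self (k + h)
    let Φ : ((Fin N → degreeLT F (k + 1)) × (Fin N → degreeLT F (k + 1))) →ₗ[F]
        (Fin M → degreeLT F (k + h + 1)) :=
      { toFun := fun p => fun ℓ =>
          ⟨Wpoly Dc N U V (fun i => ((p.1 i : F[X])), fun i => ((p.2 i : F[X]))) ℓ, hmem p ℓ⟩
        map_add' := by
          intro p p'
          funext ℓ
          apply Subtype.ext
          show Wpoly Dc N U V _ ℓ = Wpoly Dc N U V _ ℓ + Wpoly Dc N U V _ ℓ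
          rw [← Wpoly_add]
          rfl
        map_smul' := by
          intro s p
          funext ℓ
          apply Subtype.ext
          show Wpoly Dc N U V _ ℓ = s • Wpoly Dc N U V _ ℓ
          rw [← Wpoly_smul]
          rfl }
    -- dimension count gives a nonzero kernel element
    have frPk : Module.finrank F (degreeLT F (k + 1)) = k + 1 := by
      rw [(degreeLTEquiv F (k + 1)).finrank_eq, Module.finrank_fin_fun]
    have frCo : Module.finrank F (degreeLT F (k + h + 1)) = k + h + 1 := by
      rw [(degreeLTEquiv F (k + h + 1)).finrank_eq, Module.finrank_fin_fun]
    have frdom : Module.finrank F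
        ((Fin N → degreeLT F (k + 1)) × (Fin N → degreeLT F (k + 1))) = 2 * (N * (k + 1)) := by
      rw [Module.finrank_prod, Module.finrank_pi_fintype, frPk]
      simp [Finset.sum_const, Finset.card_fin]
      ring
    have frcod : Module.finrank F (Fin M → degreeLT F (k + h + 1)) = M * (k + h + 1) := by
      rw [Module.finrank_pi_fintype]
      simp [frCo, Finset.sum_const, Finset.card_fin]
    obtain ⟨v, hv0, hvker⟩ : ∃ v, v ≠ 0 ∧ Φ v = 0 := by
      by_contra hcon
      push_neg at hcon
      have hinj : Function.Injective Φ := by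
        rw [← LinearMap.ker_eq_bot, Submodule.eq_bot_iff]
        intro x hx
        by_contra hx0
        exact absurd (LinearMap.mem_ker.1 hx) (hcon x hx0)
      have hle := LinearMap.finrank_le_finrank_of_injective hinj
      rw [frdom, frcod] at hle
      omega
    -- extract the polynomials
    set a : Fin N → F[X] := fun i => ((v.1 i : F[X])) with ha
    set b : Fin N → F[X] := fun i => ((v.2 i : F[X])) with hb
    set A : F[X] := ∑ i : Fin N, a i * (X ^ q - X) ^ (i : ℕ) with hA
    set B : F[X] := ∑ i : Fin N, b i * (X ^ q - X) ^ (i : ℕ) with hB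
    have hak : ∀ i, (a i).degree ≤ (k : WithBot ℕ) := hdegp v.1
    have hbk : ∀ i, (b i).degree ≤ (k : WithBot ℕ) := hdegp v.2
    have hkq' : (k : WithBot ℕ) < ((q : ℕ) : WithBot ℕ) := by exact_mod_cast hkq
    -- the interpolation conditions hold
    have hWzero : ∀ ℓ < M, Wpoly Dc N U V (a, b) ℓ = 0 := by
      intro ℓ hℓ
      have := congrFun hvker ⟨ℓ, hℓ⟩
      exact Subtype.ext_iff.1 this
    -- degree bounds for A and B
    have hLpowdeg : ∀ i : ℕ, ((X ^ q - X : F[X]) ^ i).degree = ((i * q : ℕ) : WithBot ℕ) := by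
      intro i
      rw [degree_eq_natDegree (pow_ne_zero i hL0), natDegree_pow,
        natDegree_eq_of_degree_eq_some hdegL]
    have hdegsum : ∀ (w : Fin N → F[X]), (∀ i, (w i).degree ≤ (k : WithBot ℕ)) →
        (∑ i : Fin N, w i * (X ^ q - X) ^ (i : ℕ)).degree < ((N * q : ℕ) : WithBot ℕ) := by
      intro w hw
      refine lt_of_le_of_lt (degree_sum_le _ _) ?_
      rw [Finset.sup_lt_iff (by exact_mod_cast WithBot.bot_lt_coe (N * q))]
      intro i _
      refine lt_of_le_of_lt (degree_mul_le _ _) ?_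
      rw [hLpowdeg]
      calc (w i).degree + (((i : ℕ) * q : ℕ) : WithBot ℕ)
          ≤ (k : WithBot ℕ) + (((i : ℕ) * q : ℕ) : WithBot ℕ) :=
            add_le_add_left (hw i) _
        _ = ((k + (i : ℕ) * q : ℕ) : WithBot ℕ) := by push_cast; ring
        _ < ((N * q : ℕ) : WithBot ℕ) := by
            have hi : (i : ℕ) ≤ N - 1 := by omega
            have : k + (i : ℕ) * q < N * q := by
              have h1 : (i : ℕ) * q ≤ (N - 1) * q := Nat.mul_le_mul_right q hi
              have h2 : (N - 1) * q + q = N * q := by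
                rw [← Nat.succ_mul, Nat.succ_eq_add_one, Nat.sub_add_cancel hN1]
              omega
            exact_mod_cast this
    have hdegA : A.degree < ((N * q : ℕ) : WithBot ℕ) := hdegsum a hak
    have hdegB : B.degree < ((N * q : ℕ) : WithBot ℕ) := hdegsum b hbk
    have hNqMq : N * q ≤ M * q := Nat.mul_le_mul_right q (by omega)
    have hdegAM : A.degree < ((M * q : ℕ) : WithBot ℕ) :=
      lt_of_lt_of_le hdegA (by exact_mod_cast hNqMq)
    have hdegBM : B.degree < ((M * q : ℕ) : WithBot ℕ) :=
      lt_of_lt_of_le hdegB (by exact_mod_cast hNqMq)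
    -- pseudodegree bounds
    have hPdegLE : ∀ (w : Fin N → F[X]), (∀ i, (w i).degree ≤ (k : WithBot ℕ)) →
        PdegLE q (∑ i : Fin N, w i * (X ^ q - X) ^ (i : ℕ)) k := by
      intro w hw ℓ
      obtain ⟨t, ht⟩ := RedPoly_dvd hDc w ℓ
      have hsp : hasseDeriv ℓ (∑ i : Fin N, w i * (X ^ q - X) ^ (i : ℕ))
          = RedPoly Dc N w ℓ + (X ^ q - X) * t := by linear_combination ht
      rw [hsp, add_modByMonic]
      have h1 : RedPoly Dc N w ℓ %ₘ (X ^ q - X) = RedPoly Dc N w ℓ :=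
        (modByMonic_eq_self_iff hmonL).2
          (lt_of_le_of_lt (RedPoly_degree hw ℓ) (by rw [hdegL]; exact_mod_cast hkq))
      have h2 : ((X ^ q - X) * t) %ₘ (X ^ q - X) = 0 :=
        (modByMonic_eq_zero_iff_dvd hmonL).2 ⟨t, rfl⟩
      rw [h1, h2, add_zero]
      exact RedPoly_degree hw ℓ
    have hPdegA : PdegLE q A k := hPdegLE a hak
    have hPdegB : PdegLE q B k := hPdegLE b hbk
    -- not both zero
    have hnb : ¬(A = 0 ∧ B = 0) := by
      rintro ⟨hA0, hB0⟩
      have hdegLpos : (0 : WithBot ℕ) < (X ^ q - X : F[X]).degree := by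
        rw [hdegL]; exact_mod_cast hq0
      have hwlt : ∀ (w : Fin N → F[X]), (∀ i, (w i).degree ≤ (k : WithBot ℕ)) →
          ∀ i, (w i).degree < (X ^ q - X : F[X]).degree := by
        intro w hw i
        rw [hdegL]
        exact lt_of_le_of_lt (hw i) hkq'
      have hza := aux_digits_zero (X ^ q - X) hL0 hdegLpos N a (hwlt a hak) hA0
      have hzb := aux_digits_zero (X ^ q - X) hL0 hdegLpos N b (hwlt b hbk) hB0
      apply hv0
      rw [Prod.ext_iff]
      constructor
      · funext i
        exact Subtype.ext (hza i)
      · funext i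
        exact Subtype.ext (hzb i)
    -- the key evaluation identity
    have hLα : ∀ α : F, (X ^ q - X : F[X]).eval α = 0 := by
      intro α
      have := FiniteField.pow_card α
      rw [hq] at this
      simp [this]
    have hredeval : ∀ (w : Fin N → F[X]) (x : ℕ) (α : F),
        (hasseDeriv x (∑ i : Fin N, w i * (X ^ q - X) ^ (i : ℕ))).eval α
          = (RedPoly Dc N w x).eval α := by
      intro w x α
      obtain ⟨t, ht⟩ := RedPoly_dvd hDc w x
      have hsp : hasseDeriv x (∑ i : Fin N, w i * (X ^ q - X) ^ (i : ℕ))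
          = RedPoly Dc N w x + (X ^ q - X) * t := by linear_combination ht
      rw [hsp, eval_add, eval_mul, hLα, zero_mul, add_zero]
    have hHvan : ∀ α : F, ∀ ℓ < M, (hasseDeriv ℓ (A * Fp - B * Gp)).eval α = 0 := by
      intro α ℓ hℓ
      rw [map_sub, eval_sub, hasseDeriv_mul, hasseDeriv_mul, eval_finset_sum, eval_finset_sum]
      have e1 : ∀ xy ∈ Finset.HasAntidiagonal.antidiagonal ℓ,
          ((hasseDeriv xy.1 A) * (hasseDeriv xy.2 Fp)).eval α
            = r α * ((RedPoly Dc N a xy.1).eval α * (U xy.2).eval α) := by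
        intro xy hxy
        have hy : xy.2 < M := by
          have := Finset.HasAntidiagonal.mem_antidiagonal.1 hxy; omega
        rw [eval_mul, hA, hredeval a xy.1 α, hUeval xy.2 hy α]
        ring
      have e2 : ∀ xy ∈ Finset.HasAntidiagonal.antidiagonal ℓ,
          ((hasseDeriv xy.1 B) * (hasseDeriv xy.2 Gp)).eval α
            = r α * ((RedPoly Dc N b xy.1).eval α * (V xy.2).eval α) := by
        intro xy hxy
        have hy : xy.2 < M := by
          have := Finset.HasAntidiagonal.mem_antidiagonal.1 hxy; omega
        rw [eval_mul, hB, hredeval b xy.1 α, hVeval xy.2 hy α]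
        ring
      rw [Finset.sum_congr rfl e1, Finset.sum_congr rfl e2, ← Finset.mul_sum, ← Finset.mul_sum,
        ← mul_sub, ← Finset.sum_sub_distrib]
      have hWa := congrArg (eval α) (hWzero ℓ hℓ)
      rw [Wpoly, eval_finset_sum, eval_zero] at hWa
      simp only [eval_sub, eval_mul] at hWa
      rw [hWa, mul_zero]
    -- conclude A * Fp = B * Gp
    have hdvd : ∀ α : F, (X - C α) ^ M ∣ (A * Fp - B * Gp) :=
      fun α => aux_pow_dvd (fun ℓ hℓ => hHvan α ℓ hℓ)
    have hprod := aux_prod_dvd hdvd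
    have hcq0 : 0 < c * q := by positivity
    have hNq0 : 0 < N * q := by positivity
    have hAF : (A * Fp).degree < ((M * q : ℕ) : WithBot ℕ) := by
      refine lt_of_lt_of_le (aux_degree_mul_lt hNq0 hcq0 hdegA hFdeg) ?_
      have : N * q + c * q - 1 ≤ M * q := by
        have : N * q + c * q = M * q := by rw [← Nat.add_mul, hNc]
        omega
      exact_mod_cast this
    have hBG : (B * Gp).degree < ((M * q : ℕ) : WithBot ℕ) := by
      refine lt_of_lt_of_le (aux_degree_mul_lt hNq0 hcq0 hdegB hGdeg) ?_
      have : N * q + c * q - 1 ≤ M * q := by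
        have : N * q + c * q = M * q := by rw [← Nat.add_mul, hNc]
        omega
      exact_mod_cast this
    have hdegH : (A * Fp - B * Gp).degree < ((M * q : ℕ) : WithBot ℕ) :=
      lt_of_le_of_lt (degree_sub_le _ _) (max_lt hAF hBG)
    have hH0 : A * Fp - B * Gp = 0 := by
      by_contra hne
      have hled := degree_le_of_dvd hprod hne
      rw [aux_prod_degree, hq] at hled
      exact absurd (lt_of_le_of_lt hled hdegH) (lt_irrefl _)
    exact ⟨A, B, hnb, hdegAM, hdegBM, hPdegA, hPdegB, sub_eq_zero.1 hH0⟩
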